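/- Let G be a graph obtained from a cycle graph on vertex classes V₀, …, V_{n-1} (each of size m, with edges only of the form v_{i,j} — v_{i,j±1 mod n}, at most two per vertex per adjacent class, plus loops) by replacing the edges between class V₁ and class V₀ with the edges of a forest mapping pattern u_i — v_{i+1,0} (i = 1, …, m−1) on a subset of m−1 vertices of V₁. Then G is planar. -/

import Mathlib

/-- `H` is a minor of `G`: there are pairwise disjoint connected branch sets in `G`,
one for each vertex of `H`, joined by edges of `G` whenever the corresponding vertices
are adjacent in `H`. -/
def SimpleGraph.HasMinor {V W : Type} (G : SimpleGraph V) (H : SimpleGraph W) : Prop :=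
  ∃ β : W → Set V,
    (∀ w, (G.induce (β w)).Connected) ∧
    Pairwise (Function.onFun Disjoint β) ∧
    ∀ ⦃w w'⦄, H.Adj w w' → ∃ v ∈ β w, ∃ v' ∈ β w', G.Adj v v'

/-- Planarity of a graph, via Wagner's theorem: no `K₅` minor and no `K₃,₃` minor. -/
def SimpleGraph.IsPlanar {V : Type} (G : SimpleGraph V) : Prop :=
  ¬ G.HasMinor (completeGraph (Fin 5)) ∧
  ¬ G.HasMinor (completeBipartiteGraph (Fin 3) (Fin 3))

namespace Stmt13Aux

variable {V : Type} {G : SimpleGraph V}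

lemma walk_ivt {S : Set V} (f : V → ℕ)
    (hf : ∀ u v : V, u ∈ S → v ∈ S → G.Adj u v → f v ≤ f u + 1)
    {x y : ↥S} (p : (G.induce S).Walk x y) :
    ∀ c : ℕ, f x ≤ c → c ≤ f y → ∃ w ∈ S, f w = c := by
  induction p with
  | @nil z =>
    intro c h1 h2
    exact ⟨_, z.2, le_antisymm h1 h2⟩
  | @cons a b y h p ih =>
    intro c h1 h2
    rcases eq_or_lt_of_le h1 with he | hl
    · exact ⟨_, a.2, he⟩
    · have hadj : G.Adj ↑a ↑b := h
      have : f ↑b ≤ c := le_trans (hf ↑a ↑b a.2 b.2 hadj) hl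
      exact ih c this h2

lemma connected_ivt {S : Set V} (hS : (G.induce S).Connected) (f : V → ℕ)
    (hf : ∀ u v : V, u ∈ S → v ∈ S → G.Adj u v → f v ≤ f u + 1)
    {u v : V} (hu : u ∈ S) (hv : v ∈ S) {c : ℕ} (h1 : f u ≤ c) (h2 : c ≤ f v) :
    ∃ w ∈ S, f w = c := by
  obtain ⟨p⟩ := hS.preconnected ⟨u, hu⟩ ⟨v, hv⟩
  exact walk_ivt f hf p c h1 h2

lemma walk_const {S : Set V} (g : V → ℕ)
    (hg : ∀ u v : V, u ∈ S → v ∈ S → G.Adj u v → g u = g v)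
    {x y : ↥S} (p : (G.induce S).Walk x y) : g x = g y := by
  induction p with
  | nil => rfl
  | @cons a b y h p ih =>
    have hadj : G.Adj ↑a ↑b := h
    exact (hg ↑a ↑b a.2 b.2 hadj).trans ih

lemma connected_const {S : Set V} (hS : (G.induce S).Connected) (g : V → ℕ)
    (hg : ∀ u v : V, u ∈ S → v ∈ S → G.Adj u v → g u = g v)
    {u v : V} (hu : u ∈ S) (hv : v ∈ S) : g u = g v := by
  obtain ⟨p⟩ := hS.preconnected ⟨u, hu⟩ ⟨v, hv⟩
  exact walk_const g hg p

theorem noK4 (n m : ℕ) [NeZero n] [NeZero m] (G : SimpleGraph (Fin n × Fin m))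
    (hG : ∀ p q : Fin n × Fin m, G.Adj p q →
      (q.1 = p.1 + 1 ∨ p.1 = q.1 + 1) ∧
      (((p.1 = (1 : Fin n) ∧ q.1 = 0) ∨ (q.1 = (1 : Fin n) ∧ p.1 = 0)) →
        ((q.2 : ℕ) = (p.2 : ℕ) + 1 ∨ (p.2 : ℕ) = (q.2 : ℕ) + 1)) ∧
      (¬((p.1 = (1 : Fin n) ∧ q.1 = 0) ∨ (q.1 = (1 : Fin n) ∧ p.1 = 0)) → p.2 = q.2)) :
    ¬ G.HasMinor (SimpleGraph.completeGraph (Fin 4)) := by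
  classical
  rintro ⟨β, hconn, hdisj, hadj⟩
  set pj : Fin n × Fin m → ℕ := fun v => (v.2 : ℕ) with hpj
  set pos : Fin n × Fin m → ℕ := fun v => ((v.1 - 1 : Fin n) : ℕ) with hpos
  -- basic facts
  have hdisj' : ∀ a b : Fin 4, a ≠ b → ∀ v, v ∈ β a → v ∈ β b → False := fun a b hab v h1 h2 =>
    Set.disjoint_left.mp (hdisj hab) h1 h2
  have hwit : ∀ a b : Fin 4, a ≠ b → ∃ u ∈ β a, ∃ v ∈ β b, G.Adj u v := fun a b hab =>
    hadj hab
  have hbne : ∀ k, ∃ v, v ∈ β k := by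
    intro k
    obtain ⟨⟨v0, hv0⟩⟩ := (hconn k).nonempty
    exact ⟨v0, hv0⟩
  -- edge structure lemmas
  have hE1 : ∀ p q, G.Adj p q → pj p = pj q ∨ pj q = pj p + 1 ∨ pj p = pj q + 1 := by
    intro p q h
    obtain ⟨h1, h2, h3⟩ := hG p q h
    by_cases hb : ((p.1 = (1 : Fin n) ∧ q.1 = 0) ∨ (q.1 = (1 : Fin n) ∧ p.1 = 0))
    · rcases h2 hb with h | h
      · exact Or.inr (Or.inl h)
      · exact Or.inr (Or.inr h)
    · exact Or.inl (congrArg Fin.val (h3 hb))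
  have hCross : ∀ p q, G.Adj p q → pj p ≠ pj q →
      ((p.1 = (1 : Fin n) ∧ q.1 = 0) ∨ (q.1 = (1 : Fin n) ∧ p.1 = 0)) := by
    intro p q h hne
    obtain ⟨h1, h2, h3⟩ := hG p q h
    by_contra hb
    exact hne (congrArg Fin.val (h3 hb))
  -- Fin arithmetic helper
  have finstep : ∀ x : Fin n, x ≠ 0 → (x : ℕ) = ((x - 1 : Fin n) : ℕ) + 1 := by
    intro x hx
    rcases n with _ | n'
    · exact absurd rfl (NeZero.ne 0)
    · rw [Fin.coe_sub_one, if_neg hx]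
      have : (x : ℕ) ≠ 0 := fun h => hx (Fin.ext h)
      omega
  have posInj : ∀ x y : Fin n, ((x - 1 : Fin n) : ℕ) = ((y - 1 : Fin n) : ℕ) → x = y := by
    intro x y h
    have h2 : x - 1 = y - 1 := Fin.ext h
    have := congrArg (· + 1) h2
    simpa using this
  have hsame : ∀ u v : Fin n × Fin m, u.1 = v.1 → pj u = pj v → u = v := by
    intro u v h1 h2
    exact Prod.ext h1 (Fin.ext h2)
  have posStep : ∀ p q, G.Adj p q → ¬(p.1 = 0 ∨ p.1 = (1 : Fin n)) →
      pj p = pj q ∧ (pos q = pos p + 1 ∨ pos p = pos q + 1) := by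
    intro p q h hp
    push_neg at hp
    have hpjeq : pj p = pj q := by
      by_contra hne
      rcases hCross p q h hne with ⟨h1, _⟩ | ⟨_, h1⟩
      · exact hp.2 h1
      · exact hp.1 h1
    refine ⟨hpjeq, ?_⟩
    obtain ⟨h1, _, _⟩ := hG p q h
    rcases h1 with h1 | h1
    · left
      have hq1 : q.1 - 1 = p.1 := by rw [h1]; exact add_sub_cancel_right _ _
      have : pos q = (p.1 : ℕ) := by rw [hpos]; simp only; rw [hq1]
      rw [this, finstep p.1 hp.1]
    · right
      have hq0 : q.1 ≠ 0 := by
        intro h0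
        rw [h0, zero_add] at h1
        exact hp.2 h1
      have hp1 : p.1 - 1 = q.1 := by rw [h1]; exact add_sub_cancel_right _ _
      have : pos p = (q.1 : ℕ) := by rw [hpos]; simp only; rw [hp1]
      rw [this, finstep q.1 hq0]
  have others : ∀ k : Fin 4, ∃ i j l : Fin 4,
      i ≠ j ∧ i ≠ l ∧ j ≠ l ∧ i ≠ k ∧ j ≠ k ∧ l ≠ k := by decide
  -- Lemma X : no branch set lies entirely in the interior of a strand
  have lemX : ∀ (k : Fin 4) (c : ℕ),
      (∀ v ∈ β k, pj v = c ∧ ¬(v.1 = 0 ∨ v.1 = (1 : Fin n))) → False := by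
    intro k c hB
    obtain ⟨i, j, l, hij, hil, hjl, hik, hjk, hlk⟩ := others k
    have hint : ∀ u ∈ β k, ¬(u.1 = 0 ∨ u.1 = (1 : Fin n)) := fun u hu => (hB u hu).2
    -- finset of β k
    have hfin : (β k).Finite := Set.toFinite _
    set F := hfin.toFinset with hF
    have hFne : F.Nonempty := by
      obtain ⟨v0, hv0⟩ := hbne k
      exact ⟨v0, hfin.mem_toFinset.2 hv0⟩
    have hPne : (F.image pos).Nonempty := hFne.image _
    set mn := (F.image pos).min' hPne with hmn_def
    set mx := (F.image pos).max' hPne with hmx_def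
    obtain ⟨w1, hw1F, hw1⟩ := Finset.mem_image.1 ((F.image pos).min'_mem hPne)
    obtain ⟨w2, hw2F, hw2⟩ := Finset.mem_image.1 ((F.image pos).max'_mem hPne)
    have hw1B : w1 ∈ β k := hfin.mem_toFinset.1 hw1F
    have hw2B : w2 ∈ β k := hfin.mem_toFinset.1 hw2F
    have hmn : ∀ u ∈ β k, mn ≤ pos u := fun u hu =>
      Finset.min'_le _ _ (Finset.mem_image_of_mem pos (hfin.mem_toFinset.2 hu))
    have hmx : ∀ u ∈ β k, pos u ≤ mx := fun u hu =>
      Finset.le_max' _ _ (Finset.mem_image_of_mem pos (hfin.mem_toFinset.2 hu))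
    have hivt : ∀ d : ℕ, mn ≤ d → d ≤ mx → ∃ w ∈ β k, pos w = d := by
      intro d h1 h2
      refine connected_ivt (hconn k) pos ?_ hw1B hw2B (by omega) (by omega)
      intro u v hu hv ha
      rcases (posStep u v ha (hint u hu)).2 with h | h <;> omega
    -- token lemma
    have htok : ∀ (x : Fin 4) (u v : Fin n × Fin m), x ≠ k → u ∈ β k → v ∈ β x →
        G.Adj u v → pj v = c ∧ (pos v + 1 = mn ∨ pos v = mx + 1) := by
      intro x u v hx hu hv ha
      have hs := posStep u v ha (hint u hu)
      have huc := (hB u hu).1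
      have hc : pj v = c := by omega
      refine ⟨hc, ?_⟩
      by_cases hin : mn ≤ pos v ∧ pos v ≤ mx
      · exfalso
        obtain ⟨w, hwB, hw⟩ := hivt (pos v) hin.1 hin.2
        have hwv : w = v := by
          apply hsame
          · exact posInj _ _ hw
          · have := (hB w hwB).1
            omega
        exact hdisj' k x (Ne.symm hx) v (hwv ▸ hwB) hv
      · have hb1 := hmn u hu
        have hb2 := hmx u hu
        rcases hs.2 with h | h <;> omega
    obtain ⟨ui, hui, vi, hvi, hadji⟩ := hwit k i (Ne.symm hik)
    obtain ⟨uj, huj, vj, hvj, hadjj⟩ := hwit k j (Ne.symm hjk)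
    obtain ⟨ul, hul, vl, hvl, hadjl⟩ := hwit k l (Ne.symm hlk)
    obtain ⟨hci, hbi⟩ := htok i ui vi hik hui hvi hadji
    obtain ⟨hcj, hbj⟩ := htok j uj vj hjk huj hvj hadjj
    obtain ⟨hcl, hbl⟩ := htok l ul vl hlk hul hvl hadjl
    have heqtok : ∀ a b : Fin n × Fin m, pj a = c → pj b = c → pos a = pos b → a = b :=
      fun a b h1 h2 h3 => hsame a b (posInj _ _ h3) (by omega)
    rcases hbi with h1 | h1 <;> rcases hbj with h2 | h2 <;> rcases hbl with h3 | h3 <;>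
      first
        | exact hdisj' i j hij vi hvi ((heqtok vi vj hci hcj (by omega)) ▸ hvj)
        | exact hdisj' i l hil vi hvi ((heqtok vi vl hci hcl (by omega)) ▸ hvl)
        | exact hdisj' j l hjl vj hvj ((heqtok vj vl hcj hcl (by omega)) ▸ hvl)
  -- max of pj on each branch set
  have hfin : ∀ k : Fin 4, (β k).Finite := fun k => Set.toFinite _
  have hFne : ∀ k : Fin 4, (((hfin k).toFinset).image pj).Nonempty := by
    intro k
    obtain ⟨v0, hv0⟩ := hbne k
    exact ⟨pj v0, Finset.mem_image_of_mem pj ((hfin k).mem_toFinset.2 hv0)⟩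
  set r : Fin 4 → ℕ := fun k => (((hfin k).toFinset).image pj).max' (hFne k) with hr
  have hrmax : ∀ k, ∀ v ∈ β k, pj v ≤ r k := fun k v hv =>
    Finset.le_max' _ _ (Finset.mem_image_of_mem pj ((hfin k).mem_toFinset.2 hv))
  have hratt : ∀ k, ∃ v ∈ β k, pj v = r k := by
    intro k
    obtain ⟨v, hvF, hv⟩ := Finset.mem_image.1 ((((hfin k).toFinset).image pj).max'_mem (hFne k))
    exact ⟨v, (hfin k).mem_toFinset.1 hvF, hv⟩
  obtain ⟨k0, -, hk0⟩ := Finset.exists_min_image (Finset.univ : Finset (Fin 4)) r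
    ⟨0, Finset.mem_univ 0⟩
  set t := r k0 with ht
  have hk0' : ∀ k, t ≤ r k := fun k => hk0 k (Finset.mem_univ k)
  -- classification: a branch set not touching the separator at level t lies above level t
  have hclass : ∀ k : Fin 4,
      (¬ ∃ u ∈ β k, ((u.1 = (1 : Fin n) ∧ pj u = t) ∨ (u.1 = 0 ∧ pj u = t))) →
      ∀ v ∈ β k, t < pj v := by
    intro k hnt
    have hS : ∀ u ∈ β k, ¬((u.1 = (1 : Fin n) ∧ pj u = t) ∨ (u.1 = 0 ∧ pj u = t)) :=
      fun u hu h => hnt ⟨u, hu, h⟩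
    set g : Fin n × Fin m → ℕ := fun v => if pj v < t then 0 else if pj v = t then 1 else 2
      with hg
    have hedge : ∀ u v, u ∈ β k → v ∈ β k → G.Adj u v → g u = g v := by
      intro u v hu hv ha
      by_cases hne : pj u = pj v
      · simp only [hg, hne]
      · have hb := hCross u v ha hne
        have hd := hE1 u v ha
        have h1 : pj u ≠ t := by
          rcases hb with ⟨x1, x2⟩ | ⟨x1, x2⟩
          · exact fun he => hS u hu (Or.inl ⟨x1, he⟩)
          · exact fun he => hS u hu (Or.inr ⟨x2, he⟩)
        have h2 : pj v ≠ t := by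
          rcases hb with ⟨x1, x2⟩ | ⟨x1, x2⟩
          · exact fun he => hS v hv (Or.inr ⟨x2, he⟩)
          · exact fun he => hS v hv (Or.inl ⟨x1, he⟩)
        rcases hd with h | h | h <;> simp only [hg] <;> split_ifs <;> omega
    obtain ⟨vm, hvm, hvmax⟩ := hratt k
    have hge : t ≤ pj vm := by rw [hvmax]; exact hk0' k
    intro v hv
    have hcst : g v = g vm := connected_const (hconn k) g hedge hv hvm
    rcases eq_or_lt_of_le hge with hcase | hcase
    · exfalso
      apply lemX k t
      intro w hw
      have hcw : g w = g vm := connected_const (hconn k) g hedge hw hvm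
      have hgvm : g vm = 1 := by simp only [hg]; split_ifs <;> omega
      have hwt : pj w = t := by
        rw [hgvm] at hcw
        simp only [hg] at hcw
        split_ifs at hcw <;> omega
      refine ⟨hwt, ?_⟩
      intro hw1
      rcases hw1 with hw1 | hw1
      · exact hS w hw (Or.inr ⟨hw1, hwt⟩)
      · exact hS w hw (Or.inl ⟨hw1, hwt⟩)
    · have hgvm : g vm = 2 := by simp only [hg]; split_ifs <;> omega
      rw [hgvm] at hcst
      simp only [hg] at hcst
      split_ifs at hcst <;> omega
  -- k0 touches the separator
  have htk0 : ∃ u ∈ β k0, ((u.1 = (1 : Fin n) ∧ pj u = t) ∨ (u.1 = 0 ∧ pj u = t)) := by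
    by_contra hnt
    obtain ⟨vm, hvm, hvmax⟩ := hratt k0
    have := hclass k0 hnt vm hvm
    omega
  -- high link
  have hhigh : ∀ k : Fin 4, k ≠ k0 →
      (¬ ∃ u ∈ β k, ((u.1 = (1 : Fin n) ∧ pj u = t) ∨ (u.1 = 0 ∧ pj u = t))) →
      ∃ u ∈ β k0, ∃ v ∈ β k,
        ((u.1 = (1 : Fin n) ∧ pj u = t ∧ v.1 = 0 ∧ pj v = t + 1) ∨
         (u.1 = 0 ∧ pj u = t ∧ v.1 = (1 : Fin n) ∧ pj v = t + 1)) := by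
    intro k hk hnt
    have hhi := hclass k hnt
    obtain ⟨u, hu, v, hv, ha⟩ := hwit k0 k (Ne.symm hk)
    have h1 : pj u ≤ t := hrmax k0 u hu
    have h2 : t < pj v := hhi v hv
    have h3 := hE1 u v ha
    have h4 : pj v = pj u + 1 := by rcases h3 with h | h | h <;> omega
    have h5 : pj u = t := by omega
    rcases hCross u v ha (by omega) with ⟨hb1, hb2⟩ | ⟨hb1, hb2⟩
    · exact ⟨u, hu, v, hv, Or.inl ⟨hb1, h5, hb2, by omega⟩⟩
    · exact ⟨u, hu, v, hv, Or.inr ⟨hb2, h5, hb1, by omega⟩⟩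
  -- helper contradictions
  have pairC : ∀ (a b : Fin 4), a ≠ b → ∀ u v : Fin n × Fin m, u ∈ β a → v ∈ β b →
      u.1 = v.1 → pj u = pj v → False := by
    intro a b hab u v hu hv h1 h2
    exact hdisj' a b hab v ((hsame u v h1 h2) ▸ hu) hv
  have H3 : ∀ a b c' : Fin 4, a ≠ b → a ≠ c' → b ≠ c' →
      (∃ u ∈ β a, ((u.1 = (1 : Fin n) ∧ pj u = t) ∨ (u.1 = 0 ∧ pj u = t))) →
      (∃ u ∈ β b, ((u.1 = (1 : Fin n) ∧ pj u = t) ∨ (u.1 = 0 ∧ pj u = t))) →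
      (∃ u ∈ β c', ((u.1 = (1 : Fin n) ∧ pj u = t) ∨ (u.1 = 0 ∧ pj u = t))) → False := by
    rintro a b c' hab hac hbc ⟨ua, hua, hta⟩ ⟨ub, hub, htb⟩ ⟨uc, huc, htc⟩
    rcases hta with ⟨x1, x2⟩ | ⟨x1, x2⟩ <;> rcases htb with ⟨y1, y2⟩ | ⟨y1, y2⟩ <;>
      rcases htc with ⟨z1, z2⟩ | ⟨z1, z2⟩ <;>
      first
        | exact pairC a b hab ua ub hua hub (x1.trans y1.symm) (by omega)
        | exact pairC a c' hac ua uc hua huc (x1.trans z1.symm) (by omega)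
        | exact pairC b c' hbc ub uc hub huc (y1.trans z1.symm) (by omega)
  have H2 : ∀ a b c' : Fin 4, a ≠ b → a ≠ c' → b ≠ c' → a ≠ k0 → b ≠ k0 → c' ≠ k0 →
      (∃ u ∈ β k0, ∃ v ∈ β a,
        ((u.1 = (1 : Fin n) ∧ pj u = t ∧ v.1 = 0 ∧ pj v = t + 1) ∨
         (u.1 = 0 ∧ pj u = t ∧ v.1 = (1 : Fin n) ∧ pj v = t + 1))) →
      (∃ u ∈ β k0, ∃ v ∈ β b,
        ((u.1 = (1 : Fin n) ∧ pj u = t ∧ v.1 = 0 ∧ pj v = t + 1) ∨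
         (u.1 = 0 ∧ pj u = t ∧ v.1 = (1 : Fin n) ∧ pj v = t + 1))) →
      ((∃ u ∈ β c', ((u.1 = (1 : Fin n) ∧ pj u = t) ∨ (u.1 = 0 ∧ pj u = t))) ∨
       (∃ u ∈ β k0, ∃ v ∈ β c',
        ((u.1 = (1 : Fin n) ∧ pj u = t ∧ v.1 = 0 ∧ pj v = t + 1) ∨
         (u.1 = 0 ∧ pj u = t ∧ v.1 = (1 : Fin n) ∧ pj v = t + 1)))) → False := by
    rintro a b c' hab hac hbc hak0 hbk0 hck0 ⟨ua, hua0, va, hva, hha⟩ ⟨ub, hub0, vb, hvb, hhb⟩ hc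
    rcases hha with ⟨a1, a2, a3, a4⟩ | ⟨a1, a2, a3, a4⟩ <;>
      rcases hhb with ⟨b1, b2, b3, b4⟩ | ⟨b1, b2, b3, b4⟩ <;>
      first
        | exact pairC a b hab va vb hva hvb (a3.trans b3.symm) (by omega)
        | (rcases hc with ⟨uc, huc, hct⟩ | ⟨uc, huc0, vc, hvc, hch⟩
           · rcases hct with ⟨c1, c2⟩ | ⟨c1, c2⟩ <;>
               first
                 | exact pairC k0 c' (Ne.symm hck0) ua uc hua0 huc (a1.trans c1.symm) (by omega)
                 | exact pairC k0 c' (Ne.symm hck0) ub uc hub0 huc (b1.trans c1.symm) (by omega)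
           · rcases hch with ⟨c1, c2, c3, c4⟩ | ⟨c1, c2, c3, c4⟩ <;>
               first
                 | exact pairC a c' hac va vc hva hvc (a3.trans c3.symm) (by omega)
                 | exact pairC b c' hbc vb vc hvb hvc (b3.trans c3.symm) (by omega))
  obtain ⟨i, j, l, hij, hil, hjl, hik, hjk, hlk⟩ := others k0
  have Cc : ∀ k : Fin 4, k ≠ k0 →
      (∃ u ∈ β k, ((u.1 = (1 : Fin n) ∧ pj u = t) ∨ (u.1 = 0 ∧ pj u = t))) ∨
      (∃ u ∈ β k0, ∃ v ∈ β k,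
        ((u.1 = (1 : Fin n) ∧ pj u = t ∧ v.1 = 0 ∧ pj v = t + 1) ∨
         (u.1 = 0 ∧ pj u = t ∧ v.1 = (1 : Fin n) ∧ pj v = t + 1))) := by
    intro k hk
    by_cases h : (∃ u ∈ β k, ((u.1 = (1 : Fin n) ∧ pj u = t) ∨ (u.1 = 0 ∧ pj u = t)))
    · exact Or.inl h
    · exact Or.inr (hhigh k hk h)
  rcases Cc i hik with ti | hi <;> rcases Cc j hjk with tj | hj <;> rcases Cc l hlk with tl | hl
  · exact H3 k0 i j (Ne.symm hik) (Ne.symm hjk) hij htk0 ti tj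
  · exact H3 k0 i j (Ne.symm hik) (Ne.symm hjk) hij htk0 ti tj
  · exact H3 k0 i l (Ne.symm hik) (Ne.symm hlk) hil htk0 ti tl
  · exact H2 j l i hjl (Ne.symm hij) (Ne.symm hil) hjk hlk hik hj hl (Or.inl ti)
  · exact H3 k0 j l (Ne.symm hjk) (Ne.symm hlk) hjl htk0 tj tl
  · exact H2 i l j hil hij (Ne.symm hjl) hik hlk hjk hi hl (Or.inl tj)
  · exact H2 i j l hij hil hjl hik hjk hlk hi hj (Or.inl tl)
  · exact H2 i j l hij hil hjl hik hjk hlk hi hj (Or.inr hl)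

theorem hasMinor_K4_of_K5 {V : Type} (G : SimpleGraph V)
    (h : G.HasMinor (SimpleGraph.completeGraph (Fin 5))) : G.HasMinor (SimpleGraph.completeGraph (Fin 4)) := by
  obtain ⟨β, h1, h2, h3⟩ := h
  refine ⟨fun k => β k.castSucc, fun k => h1 _, ?_, ?_⟩
  · intro a b hab
    exact h2 (fun h => hab (Fin.castSucc_inj.mp h))
  · intro w w' hww'
    exact h3 (fun h => hww' (Fin.castSucc_inj.mp h))

theorem hasMinor_K4_of_K33 {V : Type} (G : SimpleGraph V)
    (h : G.HasMinor (completeBipartiteGraph (Fin 3) (Fin 3))) :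
    G.HasMinor (SimpleGraph.completeGraph (Fin 4)) := by
  classical
  obtain ⟨β, h1, h2, h3⟩ := h
  have hedge : ∀ (x y : Fin 3), ∃ v ∈ β (.inl x), ∃ w ∈ β (.inr y), G.Adj v w :=
    fun x y => h3 (Or.inl ⟨rfl, rfl⟩)
  have hedge' : ∀ (x y : Fin 3), ∃ v ∈ β (.inr x), ∃ w ∈ β (.inl y), G.Adj v w :=
    fun x y => h3 (Or.inr ⟨rfl, rfl⟩)
  have d : ∀ (x y : Fin 3 ⊕ Fin 3), x ≠ y → Disjoint (β x) (β y) := fun x y hxy => h2 hxy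
  set γ : Fin 4 → Set V := fun k =>
    if k = 0 then β (.inl 0) ∪ β (.inr 0)
    else if k = 1 then β (.inl 1) ∪ β (.inr 1)
    else if k = 2 then β (.inl 2) else β (.inr 2) with hγ
  refine ⟨γ, ?_, ?_, ?_⟩
  · intro k
    fin_cases k
    · obtain ⟨v, hv, w, hw, ha⟩ := hedge 0 0
      exact G.connected_induce_union (h1 _).preconnected (h1 _).preconnected hv hw ha
    · obtain ⟨v, hv, w, hw, ha⟩ := hedge 1 1
      exact G.connected_induce_union (h1 _).preconnected (h1 _).preconnected hv hw ha
    · exact h1 _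
    · exact h1 _
  · intro a b hab
    fin_cases a <;> fin_cases b <;>
      first
        | exact absurd rfl hab
        | exact Set.disjoint_union_left.mpr
            ⟨Set.disjoint_union_right.mpr ⟨d _ _ (by decide), d _ _ (by decide)⟩,
             Set.disjoint_union_right.mpr ⟨d _ _ (by decide), d _ _ (by decide)⟩⟩
        | exact Set.disjoint_union_left.mpr ⟨d _ _ (by decide), d _ _ (by decide)⟩
        | exact Set.disjoint_union_right.mpr ⟨d _ _ (by decide), d _ _ (by decide)⟩
        | exact d _ _ (by decide)
  · intro w w' hww'
    fin_cases w <;> fin_cases w'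
    · exact absurd rfl hww'
    · obtain ⟨v, hv, u, hu, ha⟩ := hedge 0 1
      exact ⟨v, Or.inl hv, u, Or.inr hu, ha⟩
    · obtain ⟨v, hv, u, hu, ha⟩ := hedge' 0 2
      exact ⟨v, Or.inr hv, u, hu, ha⟩
    · obtain ⟨v, hv, u, hu, ha⟩ := hedge 0 2
      exact ⟨v, Or.inl hv, u, hu, ha⟩
    · obtain ⟨v, hv, u, hu, ha⟩ := hedge 1 0
      exact ⟨v, Or.inl hv, u, Or.inr hu, ha⟩
    · exact absurd rfl hww'
    · obtain ⟨v, hv, u, hu, ha⟩ := hedge' 1 2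
      exact ⟨v, Or.inr hv, u, hu, ha⟩
    · obtain ⟨v, hv, u, hu, ha⟩ := hedge 1 2
      exact ⟨v, Or.inl hv, u, hu, ha⟩
    · obtain ⟨v, hv, u, hu, ha⟩ := hedge 2 0
      exact ⟨v, hv, u, Or.inr hu, ha⟩
    · obtain ⟨v, hv, u, hu, ha⟩ := hedge 2 1
      exact ⟨v, hv, u, Or.inr hu, ha⟩
    · exact absurd rfl hww'
    · obtain ⟨v, hv, u, hu, ha⟩ := hedge 2 2
      exact ⟨v, hv, u, hu, ha⟩
    · obtain ⟨v, hv, u, hu, ha⟩ := hedge' 2 0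
      exact ⟨v, hv, u, Or.inl hu, ha⟩
    · obtain ⟨v, hv, u, hu, ha⟩ := hedge' 2 1
      exact ⟨v, hv, u, Or.inl hu, ha⟩
    · obtain ⟨v, hv, u, hu, ha⟩ := hedge' 2 2
      exact ⟨v, hv, u, hu, ha⟩
    · exact absurd rfl hww'

end Stmt13Aux

/-- Let `G` be a graph on vertex classes `V₀, …, V_{n−1}` (each of size
`m`) arranged in a cycle, with edges only between consecutive classes, all of them
'parallel' (`v_{i,j} — v_{i,j±1}`), except between class `1` and class `0`, where the
edges follow the shifted forest mapping pattern `u_i — v_{i+1,0}`. Then `G` is planar. -/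
theorem stmt13 (n m : ℕ) [NeZero n] [NeZero m] (G : SimpleGraph (Fin n × Fin m))
    (hG : ∀ p q : Fin n × Fin m, G.Adj p q →
      (q.1 = p.1 + 1 ∨ p.1 = q.1 + 1) ∧
      (((p.1 = (1 : Fin n) ∧ q.1 = 0) ∨ (q.1 = (1 : Fin n) ∧ p.1 = 0)) →
        ((q.2 : ℕ) = (p.2 : ℕ) + 1 ∨ (p.2 : ℕ) = (q.2 : ℕ) + 1)) ∧
      (¬((p.1 = (1 : Fin n) ∧ q.1 = 0) ∨ (q.1 = (1 : Fin n) ∧ p.1 = 0)) → p.2 = q.2)) :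
    G.IsPlanar := by
  constructor
  · intro h5
    exact Stmt13Aux.noK4 n m G hG (Stmt13Aux.hasMinor_K4_of_K5 G h5)
  · intro h33
    exact Stmt13Aux.noK4 n m G hG (Stmt13Aux.hasMinor_K4_of_K33 G h33)
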